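/- Let G be a connected graph on n vertices with chromatic number χ, and fix an optimal χ-coloring with class sizes ℓ1 ≥ ⋯ ≥ ℓχ. Assuming edge-deletion monotonicity of distance Laplacian eigenvalues (deleting an edge from a connected graph, keeping it connected, weakly increases each ordered eigenvalue), the i-th largest distance Laplacian eigenvalue of G satisfies ∂^L_i(G) ≥ n + ℓ1 for all 1 ≤ i ≤ ℓ1 − 1. -/

import Mathlib

open Finset

/-- Transmission of a vertex: sum of distances to all vertices. -/
noncomputable def transmission {n : ℕ} (G : SimpleGraph (Fin n)) (v : Fin n) : ℕ :=
  ∑ u : Fin n, G.dist u v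

/-- The distance Laplacian matrix `DL(G) = Tr(G) − D(G)`. -/
noncomputable def distLap {n : ℕ} (G : SimpleGraph (Fin n)) : Matrix (Fin n) (Fin n) ℝ :=
  Matrix.diagonal (fun v => (transmission G v : ℝ)) -
    Matrix.of (fun u v => (G.dist u v : ℝ))

/-- `DLeig G i` is the `i`-th largest distance Laplacian eigenvalue of `G`
(1-indexed, counted with algebraic multiplicity): the eigenvalues are the roots
of the characteristic polynomial of `DL(G)`, sorted in nonincreasing order. -/
noncomputable def DLeig {n : ℕ} (G : SimpleGraph (Fin n)) (i : ℕ) : ℝ :=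
  (((distLap G).charpoly.roots).sort (· ≥ ·)).getD (i - 1) 0

section Aux
open Polynomial Matrix

lemma charpoly_diagonal {m : ℕ} (d : Fin m → ℝ) :
    (Matrix.diagonal d).charpoly = ∏ j, (X - C (d j)) := by
  have h : (Matrix.diagonal d).charmatrix = Matrix.diagonal (fun j => (X : ℝ[X]) - C (d j)) := by
    ext i j
    by_cases hij : i = j
    · subst hij; simp
    · simp [Matrix.charmatrix_apply_ne _ _ _ hij, Matrix.diagonal_apply_ne _ hij,
        Matrix.diagonal_apply_ne d hij]
  rw [Matrix.charpoly, h, Matrix.det_diagonal]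

lemma charpoly_conj {m : ℕ} (U B : Matrix (Fin m) (Fin m) ℝ)
    (h1 : U * star U = 1) (h2 : star U * U = 1) :
    (U * B * star U).charpoly = B.charpoly := by
  have hmap : ∀ (M N : Matrix (Fin m) (Fin m) ℝ),
      (M * N).map (C : ℝ → ℝ[X]) = M.map C * N.map C := by
    intro M N; exact Matrix.map_mul
  have hcm : (U * B * star U).charmatrix =
      U.map C * B.charmatrix * (star U).map C := by
    have hs : U.map (C : ℝ → ℝ[X]) * Matrix.scalar (Fin m) (X : ℝ[X]) * (star U).map C
        = Matrix.scalar (Fin m) (X : ℝ[X]) := by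
      have hcomm := (Matrix.scalar_commute (X : ℝ[X]) (fun r' => Commute.all _ _)
        (U.map (C : ℝ → ℝ[X]))).eq
      rw [← hcomm, mul_assoc, ← hmap, h1]
      simp
    unfold Matrix.charmatrix
    rw [mul_sub, sub_mul]
    congr 1
    · exact (by simpa using hs.symm)
    · simp only [RingHom.mapMatrix_apply]
      rw [← hmap, ← hmap]
  rw [Matrix.charpoly, Matrix.charpoly, hcm, Matrix.det_mul, Matrix.det_mul]
  have : (U.map (C : ℝ → ℝ[X])).det * ((star U).map C).det = 1 := by
    rw [← Matrix.det_mul, ← hmap, h1]; simp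
  calc (U.map (C : ℝ → ℝ[X])).det * B.charmatrix.det * ((star U).map C).det
      = (U.map (C : ℝ → ℝ[X])).det * ((star U).map C).det * B.charmatrix.det := by ring
    _ = B.charmatrix.det := by rw [this, one_mul]

lemma hermitian_charpoly {m : ℕ} {A : Matrix (Fin m) (Fin m) ℝ} (hA : A.IsHermitian) :
    A.charpoly = ∏ j, (X - C (hA.eigenvalues j)) := by
  have hU1 : (hA.eigenvectorUnitary : Matrix (Fin m) (Fin m) ℝ) *
      star (hA.eigenvectorUnitary : Matrix (Fin m) (Fin m) ℝ) = 1 :=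
    by
      have := hA.eigenvectorUnitary.2
      rw [Matrix.mem_unitaryGroup_iff] at this
      exact this
  have hU2 : star (hA.eigenvectorUnitary : Matrix (Fin m) (Fin m) ℝ) *
      (hA.eigenvectorUnitary : Matrix (Fin m) (Fin m) ℝ) = 1 := by
    have := hA.eigenvectorUnitary.2
    rw [Matrix.mem_unitaryGroup_iff'] at this
    exact this
  have hdiag : Matrix.diagonal (RCLike.ofReal ∘ hA.eigenvalues) =
      Matrix.diagonal hA.eigenvalues := by
    congr 1
  calc A.charpoly
      = ((hA.eigenvectorUnitary : Matrix (Fin m) (Fin m) ℝ) *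
          Matrix.diagonal hA.eigenvalues *
          star (hA.eigenvectorUnitary : Matrix (Fin m) (Fin m) ℝ)).charpoly := by
        conv_lhs => rw [hA.spectral_theorem]
        rw [hdiag]; rfl
    _ = (Matrix.diagonal hA.eigenvalues).charpoly := charpoly_conj _ _ hU1 hU2
    _ = ∏ j, (X - C (hA.eigenvalues j)) := _root_.charpoly_diagonal _

lemma roots_charpoly_hermitian {m : ℕ} {A : Matrix (Fin m) (Fin m) ℝ} (hA : A.IsHermitian) :
    A.charpoly.roots = Multiset.map hA.eigenvalues Finset.univ.val := by
  rw [hermitian_charpoly hA, Finset.prod_eq_multiset_prod]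
  have : Multiset.map (fun j => X - C (hA.eigenvalues j)) Finset.univ.val
      = Multiset.map (fun a => X - C a) (Multiset.map hA.eigenvalues Finset.univ.val) := by
    rw [Multiset.map_map]; rfl
  rw [this, roots_multiset_prod_X_sub_C]

lemma sorted_getD_ge (c : ℝ) :
    ∀ (l : List ℝ), l.Pairwise (· ≥ ·) → ∀ (k : ℕ),
      k < l.countP (fun x => decide (c ≤ x)) → c ≤ l.getD k 0 := by
  intro l
  induction l with
  | nil => intro _ k hk; simp at hk
  | cons a t ih =>
    intro hs k hk
    have hs' : t.Pairwise (· ≥ ·) := hs.of_cons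
    have ha : ∀ x ∈ t, a ≥ x := fun x hx => List.rel_of_pairwise_cons hs hx
    cases k with
    | zero =>
      simp only [List.getD_cons_zero]
      by_contra hca
      push_neg at hca
      -- a < c, so a fails the predicate, and all of t ≤ a < c fail too
      have : (a :: t).countP (fun x => decide (c ≤ x)) = 0 := by
        rw [List.countP_eq_zero]
        intro x hx
        simp only [decide_eq_true_eq]
        intro hcx
        rcases List.mem_cons.mp hx with h | h
        · subst h; exact absurd hcx (not_le.mpr hca)
        · exact absurd hcx (not_le.mpr (lt_of_le_of_lt (ha x h) hca))
      omega
    | succ k =>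
      simp only [List.getD_cons_succ]
      apply ih hs' k
      have : (a :: t).countP (fun x => decide (c ≤ x)) ≤
          t.countP (fun x => decide (c ≤ x)) + 1 := by
        rw [List.countP_cons]
        split <;> omega
      omega

lemma eig_count_ge {m : ℕ} {A : Matrix (Fin m) (Fin m) ℝ} (hA : A.IsHermitian)
    {ι : Type} [Fintype ι] (x : ι → (Fin m → ℝ)) (hind : LinearIndependent ℝ x)
    {μ : ℝ} (hx : ∀ u, A *ᵥ (x u) = μ • (x u)) :
    Fintype.card ι ≤ (Finset.univ.filter (fun j => hA.eigenvalues j = μ)).card := by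
  classical
  set β : Module.Basis (Fin m) ℝ (Fin m → ℝ) :=
    (hA.eigenvectorBasis.toBasis).map (WithLp.linearEquiv 2 ℝ (Fin m → ℝ)) with hβ
  have hβap : ∀ j, β j = (WithLp.equiv 2 (Fin m → ℝ)) (hA.eigenvectorBasis j) := by
    intro j
    simp [hβ, Module.Basis.map_apply]
  have hAβ : ∀ j, A *ᵥ β j = hA.eigenvalues j • β j := by
    intro j; rw [hβap]; exact hA.mulVec_eigenvectorBasis j
  set S : Finset (Fin m) := Finset.univ.filter (fun j => hA.eigenvalues j = μ) with hS
  -- every vector in the μ-eigenspace is in the span of eigenbasis vectors from S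
  have hmem : ∀ u, x u ∈ Submodule.span ℝ (β '' (S : Set (Fin m))) := by
    intro u
    rw [Module.Basis.mem_span_image]
    intro j hj
    simp only [Finsupp.mem_support_iff, Finset.mem_coe] at hj ⊢
    by_contra hjS
    have hjμ : hA.eigenvalues j ≠ μ := by
      intro h; exact hjS (by simp [hS, h])
    apply hj
    -- show the j-th coordinate is 0
    set c : Fin m → ℝ := fun j => β.repr (x u) j with hc
    have hrep : ∑ i, c i • β i = x u := β.sum_repr (x u)
    have h1 : A *ᵥ (x u) = ∑ i, (hA.eigenvalues i * c i) • β i := by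
      rw [← hrep]
      have : A *ᵥ (∑ i, c i • β i) = ∑ i, c i • (A *ᵥ β i) := by
        rw [show (A *ᵥ ∑ i, c i • β i) = A.mulVecLin (∑ i, c i • β i) from rfl]
        rw [map_sum]
        simp [Matrix.mulVecLin]
      rw [this]
      refine Finset.sum_congr rfl (fun i _ => ?_)
      rw [hAβ i, smul_smul, mul_comm]
    have h2 : μ • (x u) = ∑ i, (μ * c i) • β i := by
      rw [← hrep, Finset.smul_sum]
      congr 1; ext i; rw [smul_smul]
    have h4 : ∑ i, (hA.eigenvalues i * c i) • β i = ∑ i, (μ * c i) • β i := by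
      rw [← h1, ← h2, hx u]
    have h3 : ∑ i, ((hA.eigenvalues i - μ) * c i) • β i = 0 := by
      have heach : ∀ i, ((hA.eigenvalues i - μ) * c i) • β i
          = (hA.eigenvalues i * c i) • β i - (μ * c i) • β i := by
        intro i; rw [← sub_smul]; congr 1; ring
      rw [Finset.sum_congr rfl (fun i _ => heach i), Finset.sum_sub_distrib, h4, sub_self]
    have := Fintype.linearIndependent_iff.mp β.linearIndependent
      (fun i => (hA.eigenvalues i - μ) * c i) h3 j
    have : c j = 0 := by
      rcases mul_eq_zero.mp this with h | h
      · exact absurd (by linarith [sub_eq_zero.mp h] : hA.eigenvalues j = μ) hjμ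
      · exact h
    exact this
  -- conclude by dimension count
  set V := Submodule.span ℝ (β '' (S : Set (Fin m)))
  have hindS : LinearIndependent ℝ (fun (j : {j // j ∈ S}) => β j) :=
    β.linearIndependent.comp Subtype.val Subtype.val_injective
  have hfr : Module.finrank ℝ V = S.card := by
    have : Set.range (fun (j : {j // j ∈ S}) => β j) = β '' (S : Set (Fin m)) := by
      ext y
      simp [Set.mem_image, Set.mem_range]
    rw [show V = Submodule.span ℝ (Set.range (fun (j : {j // j ∈ S}) => β j)) by rw [this]]
    rw [finrank_span_eq_card hindS, Fintype.card_coe]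
  set x' : ι → V := fun u => ⟨x u, hmem u⟩ with hx'
  have hindx' : LinearIndependent ℝ x' := by
    apply LinearIndependent.of_comp V.subtype
    exact hind
  calc Fintype.card ι ≤ Module.finrank ℝ V := hindx'.fintype_card_le_finrank
    _ = S.card := hfr

lemma chain_le {n : ℕ} (G : SimpleGraph (Fin n)) (hG : G.Connected)
    (hmono : ∀ (H : SimpleGraph (Fin n)) (e : Sym2 (Fin n)), H.Connected →
      e ∈ H.edgeSet → (H.deleteEdges {e}).Connected →
      ∀ i, DLeig H i ≤ DLeig (H.deleteEdges {e}) i) :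
    ∀ (k : ℕ) (H : SimpleGraph (Fin n)), G ≤ H →
      (H.edgeSet \ G.edgeSet).ncard = k → ∀ i, DLeig H i ≤ DLeig G i := by
  intro k
  induction k using Nat.strong_induction_on with
  | _ k ih =>
    intro H hGH hk i
    rcases Nat.eq_zero_or_pos k with hk0 | hkpos
    · -- H = G
      subst hk0
      have hfin : (H.edgeSet \ G.edgeSet).Finite := Set.toFinite _
      have hempty : H.edgeSet \ G.edgeSet = ∅ := by
        rw [← Set.ncard_eq_zero hfin] at *; exact hk
      have hsub : H.edgeSet ⊆ G.edgeSet := by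
        intro e he
        by_contra hne
        exact absurd (Set.mem_diff e |>.mpr ⟨he, hne⟩) (by rw [hempty]; simp)
      have : H = G := le_antisymm (SimpleGraph.edgeSet_subset_edgeSet.mp hsub) hGH
      rw [this]
    · obtain ⟨e, he⟩ : ∃ e, e ∈ H.edgeSet \ G.edgeSet := by
        exact Set.nonempty_of_ncard_ne_zero (by omega)
      set H' := H.deleteEdges {e} with hH'
      have hGH' : G ≤ H' := by
        intro u v huv
        rw [hH', SimpleGraph.deleteEdges_adj]
        refine ⟨hGH huv, ?_⟩
        intro hmem
        simp only [Set.mem_singleton_iff] at hmem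
        exact he.2 (hmem ▸ ((SimpleGraph.mem_edgeSet G).mpr huv))
      have hstep := hmono H e (hG.mono hGH) he.1 (hG.mono hGH') i
      have hrec : (H'.edgeSet \ G.edgeSet).ncard = k - 1 := by
        have hE : H'.edgeSet = H.edgeSet \ {e} := SimpleGraph.edgeSet_deleteEdges {e}
        have : H'.edgeSet \ G.edgeSet = (H.edgeSet \ G.edgeSet) \ {e} := by
          rw [hE]; ext a; simp only [Set.mem_diff, Set.mem_singleton_iff]; tauto
        rw [this, Set.ncard_diff_singleton_of_mem he, hk]
      exact le_trans hstep (ih (k-1) (by omega) H' hGH' hrec i)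

lemma key {n χ : ℕ} (C0 : Fin n → Fin χ) (K : SimpleGraph (Fin n))
    (hK : ∀ u v, K.Adj u v ↔ C0 u ≠ C0 v) (hKconn : K.Connected)
    (hwit : ∀ u : Fin n, ∃ w, C0 w ≠ C0 u) (u0 : Fin n)
    (hcard : 2 ≤ (univ.filter (fun v => C0 v = C0 u0)).card) :
    ∀ i : ℕ, 1 ≤ i → i ≤ (univ.filter (fun v => C0 v = C0 u0)).card - 1 →
      (n : ℝ) + ((univ.filter (fun v => C0 v = C0 u0)).card : ℝ) ≤ DLeig K i := by
  classical
  set class0 : Finset (Fin n) := univ.filter (fun v => C0 v = C0 u0) with hclass0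
  set L : ℕ := class0.card with hL
  set μ : ℝ := (n : ℝ) + L with hμ
  intro i hi1 hi2
  -- distance facts
  have hd1 : ∀ u v : Fin n, C0 u ≠ C0 v → K.dist u v = 1 := by
    intro u v h
    exact SimpleGraph.dist_eq_one_iff_adj.mpr ((hK u v).mpr h)
  have hd2 : ∀ u v : Fin n, u ≠ v → C0 u = C0 v → K.dist u v = 2 := by
    intro u v hne h
    obtain ⟨w, hw⟩ := hwit u
    have h1 : K.Adj u w := (hK u w).mpr (Ne.symm hw)
    have h2 : K.Adj w v := (hK w v).mpr (fun hc => hw (h ▸ hc))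
    have hle : K.dist u v ≤ 2 := by
      have := SimpleGraph.dist_le (SimpleGraph.Walk.cons h1 (SimpleGraph.Walk.cons h2 SimpleGraph.Walk.nil))
      simpa using this
    have hpos : 0 < K.dist u v := hKconn.pos_dist_of_ne hne
    have hne1 : K.dist u v ≠ 1 := by
      intro hd
      exact absurd ((hK u v).mp (SimpleGraph.dist_eq_one_iff_adj.mp hd)) (by simp [h])
    omega
  -- transmission
  have htr : ∀ v : Fin n, C0 v = C0 u0 → (transmission K v : ℝ) = n + L - 2 := by
    intro v hv
    have heach : ∀ u : Fin n, (K.dist u v : ℝ) =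
        (if C0 u = C0 v then 2 else 1) - (if u = v then 2 else 0) := by
      intro u
      by_cases huv : u = v
      · subst huv; simp [SimpleGraph.dist_self]
      · by_cases hc : C0 u = C0 v
        · rw [hd2 u v huv hc]; simp [hc, huv]
        · rw [hd1 u v hc]; simp [hc, huv]
    have : (transmission K v : ℝ) = ∑ u : Fin n, (K.dist u v : ℝ) := by
      rw [transmission]; push_cast; rfl
    rw [this, Finset.sum_congr rfl (fun u _ => heach u), Finset.sum_sub_distrib]
    have hs1 : ∑ u : Fin n, (if C0 u = C0 v then (2:ℝ) else 1) = n + L := by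
      rw [Finset.sum_ite]
      have hfeq : univ.filter (fun u => C0 u = C0 v) = class0 := by
        rw [hclass0]; congr 1; ext u; rw [hv]
      have hcc : (univ.filter (fun u => ¬ C0 u = C0 v)).card = n - L := by
        have := Finset.card_filter_add_card_filter_not
          (s := (univ : Finset (Fin n))) (p := fun u => C0 u = C0 v)
        rw [hfeq] at this
        simp only [Finset.card_univ, Fintype.card_fin] at this
        omega
      rw [Finset.sum_const, Finset.sum_const, hfeq, hcc]
      have hLn : L ≤ n := by
        rw [hL, hclass0]
        calc class0.card ≤ (univ : Finset (Fin n)).card := Finset.card_le_card (Finset.subset_univ _)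
          _ = n := by simp
      rw [nsmul_eq_mul, nsmul_eq_mul, Nat.cast_sub hLn, ← hL]
      push_cast
      ring
    have hs2 : ∑ u : Fin n, (if u = v then (2:ℝ) else 0) = 2 := by
      simp
    rw [hs1, hs2]
  -- the distance Laplacian entries
  have hDL : ∀ w v : Fin n, distLap K w v =
      (if w = v then (transmission K w : ℝ) else 0) - K.dist w v := by
    intro w v
    simp [distLap, Matrix.sub_apply, Matrix.diagonal, Matrix.of_apply]
  have hu0 : u0 ∈ class0 := by rw [hclass0]; simp
  set x : {u // u ∈ class0.erase u0} → (Fin n → ℝ) :=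
    fun u => (fun w => if w = u0 then 1 else if w = (u : Fin n) then -1 else 0) with hx
  have hxprop : ∀ u : {u // u ∈ class0.erase u0},
      (u : Fin n) ≠ u0 ∧ C0 (u : Fin n) = C0 u0 := by
    intro u
    have h2 : (u : Fin n) ∈ class0.erase u0 := u.2
    refine ⟨Finset.ne_of_mem_erase h2, ?_⟩
    have h1 : (u : Fin n) ∈ univ.filter (fun v => C0 v = C0 u0) :=
      Finset.mem_of_mem_erase h2
    exact (Finset.mem_filter.mp h1).2
  have heig : ∀ u, distLap K *ᵥ (x u) = μ • (x u) := by
    intro u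
    obtain ⟨hneu, hcu⟩ := hxprop u
    funext w
    have hsum : (distLap K *ᵥ (x u)) w
        = distLap K w u0 * 1 + distLap K w (u : Fin n) * (-1) := by
      show ∑ v, distLap K w v * x u v = _
      rw [← Finset.sum_subset (Finset.subset_univ ({u0, (u : Fin n)} : Finset (Fin n)))]
      · rw [Finset.sum_insert (by simp [Ne.symm hneu]), Finset.sum_singleton]
        simp [hx, hneu, Ne.symm hneu]
      · intro v _ hv
        simp only [Finset.mem_insert, Finset.mem_singleton, not_or] at hv
        simp [hx, hv.1, hv.2]
    rw [hsum, hDL, hDL]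
    by_cases hw0 : w = u0
    · have hwu' : ¬ w = (u : Fin n) := by rw [hw0]; exact Ne.symm hneu
      have hdist : K.dist w (u : Fin n) = 2 := by
        rw [hw0]; exact hd2 u0 _ (Ne.symm hneu) hcu.symm
      have htrw : (transmission K w : ℝ) = ↑n + ↑L - 2 := by rw [hw0]; exact htr _ rfl
      have hdww : K.dist w u0 = 0 := by rw [hw0]; simp
      have hxval : (μ • x u) w = μ := by simp [hx, hw0, hμ]
      rw [hxval]
      simp only [if_pos hw0, if_neg hwu', hdww, hdist, htrw, hxval, hμ]
      push_cast
      ring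
    · by_cases hwu : w = (u : Fin n)
      · have hdist : K.dist w u0 = 2 := by rw [hwu]; exact hd2 _ u0 hneu hcu
        have htrw : (transmission K w : ℝ) = ↑n + ↑L - 2 := by rw [hwu]; exact htr _ hcu
        have hdww : K.dist w (u : Fin n) = 0 := by rw [hwu]; simp
        have hxval : (μ • x u) w = -μ := by simp [hx, hw0, hwu, hneu, hμ]
        rw [hxval]
        simp only [if_neg hw0, if_pos hwu, hdist, hdww, htrw, hxval, hμ]
        push_cast
        ring
      · have hdd : (K.dist w u0 : ℝ) = K.dist w (u : Fin n) := by
          by_cases hc : C0 w = C0 u0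
          · rw [hd2 w u0 hw0 hc, hd2 w (u : Fin n) hwu (hc.trans hcu.symm)]
          · rw [hd1 w u0 hc, hd1 w (u : Fin n) (fun hcon => hc (hcon.trans hcu))]
        have hxval : (μ • x u) w = 0 := by simp [hx, hw0, hwu]
        simp only [if_neg hw0, if_neg hwu, hxval]
        rw [hdd]
        ring
  have hind : LinearIndependent ℝ x := by
    rw [Fintype.linearIndependent_iff]
    intro g hg j
    have hcf := congrFun hg (j : Fin n)
    simp only [Finset.sum_apply, Pi.smul_apply, smul_eq_mul, Pi.zero_apply] at hcf
    have hjne : (j : Fin n) ≠ u0 := (hxprop j).1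
    have hval : ∑ b, g b * x b (j : Fin n) = -(g j) := by
      rw [Finset.sum_eq_single j]
      · simp [hx, hjne]
      · intro b _ hbj
        have hne : (j : Fin n) ≠ (b : Fin n) := fun h => hbj (Subtype.ext h.symm)
        simp [hx, hjne, hne]
      · simp
    rw [hval] at hcf
    linarith
  have hherm : (distLap K).IsHermitian := by
    rw [Matrix.IsHermitian]
    ext a b
    simp only [Matrix.conjTranspose_apply, star_trivial]
    rw [hDL, hDL, SimpleGraph.dist_comm]
    by_cases hab : a = b
    · subst hab; rfl
    · simp [hab, Ne.symm hab]
  have hcount := eig_count_ge hherm x hind heig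
  have hcardx : Fintype.card {u // u ∈ class0.erase u0} = L - 1 := by
    rw [Fintype.card_coe, Finset.card_erase_of_mem hu0]
  rw [DLeig]
  apply sorted_getD_ge μ _ (Multiset.pairwise_sort _ _)
  have hroots := roots_charpoly_hermitian hherm
  have hlist : (((distLap K).charpoly.roots).sort (· ≥ ·)).countP (fun y => decide (μ ≤ y))
      = Multiset.countP (fun y => μ ≤ y) ((distLap K).charpoly.roots) := by
    conv_rhs => rw [← Multiset.sort_eq (s := (distLap K).charpoly.roots) (r := (· ≥ ·))]
    rw [Multiset.coe_countP]
  rw [hlist, hroots, Multiset.countP_map]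
  have hfc : Multiset.card (Multiset.filter (fun a => μ ≤ hherm.eigenvalues a) univ.val)
      = (univ.filter (fun j => μ ≤ hherm.eigenvalues j)).card := by
    rw [Finset.card, Finset.filter_val]
  rw [hfc]
  have hsub : (univ.filter (fun j => hherm.eigenvalues j = μ))
      ⊆ (univ.filter (fun j => μ ≤ hherm.eigenvalues j)) := by
    intro j hj
    simp only [Finset.mem_filter] at hj ⊢
    exact ⟨hj.1, le_of_eq hj.2.symm⟩
  have hle := Finset.card_le_card hsub
  rw [hcardx] at hcount
  omega

end Aux

open Polynomial Matrix

/-- Color-class majorization principle: if `G` is connected with chromatic number `χ`,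
and an optimal `χ`-coloring has class sizes `ℓ 0 ≥ ℓ 1 ≥ ⋯`, then assuming
edge-deletion monotonicity of the ordered distance Laplacian eigenvalues,
`∂ᴸᵢ(G) ≥ n + ℓ₁` for all `1 ≤ i ≤ ℓ₁ − 1`, where `ℓ₁ = ℓ 0` is the largest class size. -/
theorem stmt5 {n χ : ℕ} (hχpos : 0 < χ) (G : SimpleGraph (Fin n)) (hG : G.Connected)
    (hχ : G.chromaticNumber = χ) (C : G.Coloring (Fin χ))
    (ℓ : Fin χ → ℕ) (hsize : ∀ j, (Finset.univ.filter (fun v => C v = j)).card = ℓ j)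
    (hmonoℓ : Antitone ℓ)
    (hmono : ∀ (H : SimpleGraph (Fin n)) (e : Sym2 (Fin n)), H.Connected →
      e ∈ H.edgeSet → (H.deleteEdges {e}).Connected →
      ∀ i, DLeig H i ≤ DLeig (H.deleteEdges {e}) i) :
    ∀ i : ℕ, 1 ≤ i → i ≤ ℓ ⟨0, hχpos⟩ - 1 →
      (n : ℝ) + (ℓ ⟨0, hχpos⟩ : ℝ) ≤ DLeig G i := by
  intro i hi1 hi2
  set j0 : Fin χ := ⟨0, hχpos⟩ with hj0
  have hL2 : 2 ≤ ℓ j0 := by omega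
  have hcards : (univ.filter (fun v => C v = j0)).card = ℓ j0 := hsize j0
  set K : SimpleGraph (Fin n) :=
    ⟨fun u v => C u ≠ C v, ⟨fun u v h => Ne.symm h⟩, ⟨fun u h => h rfl⟩⟩ with hKdef
  have hKadj : ∀ u v, K.Adj u v ↔ C u ≠ C v := fun u v => Iff.rfl
  have hGK : G ≤ K := fun u v huv => C.valid huv
  have hKconn : K.Connected := hG.mono hGK
  obtain ⟨u0, hu0⟩ : ∃ u0, u0 ∈ univ.filter (fun v => C v = j0) :=
    Finset.card_pos.mp (by omega)
  have hu0c : C u0 = j0 := (Finset.mem_filter.mp hu0).2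
  obtain ⟨v0, hv0, hv0ne⟩ : ∃ v0 ∈ univ.filter (fun v => C v = j0), v0 ≠ u0 :=
    Finset.exists_mem_ne (by omega) u0
  obtain ⟨a, b, hab⟩ : ∃ a b, G.Adj a b := by
    obtain ⟨p⟩ := hG.preconnected u0 v0
    cases p with
    | nil => exact absurd rfl (Ne.symm hv0ne)
    | cons h q => exact ⟨_, _, h⟩
  have hwit : ∀ u : Fin n, ∃ w, C w ≠ C u := by
    intro u
    by_cases hca : C a = C u
    · exact ⟨b, fun hcb => (C.valid hab) (hca.trans hcb.symm ▸ rfl)⟩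
    · exact ⟨a, hca⟩
  have hfilt : univ.filter (fun v => C v = C u0) = univ.filter (fun v => C v = j0) := by
    rw [hu0c]
  have hkey := key (fun v => C v) K hKadj hKconn hwit u0
    (by rw [hfilt, hcards]; exact hL2) i hi1
    (by rw [hfilt, hcards]; exact hi2)
  rw [hfilt, hcards] at hkey
  have hchain := chain_le G hG hmono (K.edgeSet \ G.edgeSet).ncard K hGK rfl i
  exact le_trans hkey hchain
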